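/- Let N ≥ 1 be an integer and for each k ∈ ℕ let x₀(k) < x₁(k) < ⋯ < x_{2N}(k) be points of the extended real line [−∞,+∞], with x_j(k) ∈ ℝ for 1 ≤ j ≤ 2N−1, such that lim_{k→∞}(x₁(k) − x₀(k)) = +∞ and lim_{k→∞}(x_{2N}(k) − x_{2N−1}(k)) = +∞. Then there exist integers i₀, j₀ with 1 ≤ i₀ ≤ j₀ ≤ N and a subsequence along which: (a) the sequence x_{2j₀−1}(k) − x_{2i₀−1}(k) is bounded; (b) x_{2i₀−1}(k) − x_{2i₀−2}(k) → +∞; and (c) x_{2j₀}(k) − x_{2j₀−1}(k) → +∞. -/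
import Mathlib


open Filter

private lemma sub_of_unbdd (v : ℕ → ℝ) (h : ¬ ∃ C : ℝ, ∀ k, v k ≤ C) :
    ∃ ψ : ℕ → ℕ, StrictMono ψ ∧ Tendsto (fun k => v (ψ k)) atTop atTop := by
  push_neg at h
  have hfreq : ∀ n : ℕ, ∃ᶠ k in atTop, (n : ℝ) < v k := by
    intro n
    rw [frequently_atTop]
    intro M
    obtain ⟨k, hk⟩ := h (max (n : ℝ) ((Finset.range (M + 1)).sup' ⟨0, by simp⟩ v))
    refine ⟨k, ?_, lt_of_le_of_lt (le_max_left _ _) hk⟩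
    by_contra hkM
    push_neg at hkM
    have : v k ≤ (Finset.range (M + 1)).sup' ⟨0, by simp⟩ v :=
      Finset.le_sup' v (Finset.mem_range.2 (by omega))
    exact absurd hk (not_lt.2 (this.trans (le_max_right _ _)))
  obtain ⟨ψ, hψ, hP⟩ := extraction_forall_of_frequently hfreq
  exact ⟨ψ, hψ, tendsto_atTop_mono (fun n => (hP n).le) tendsto_natCast_atTop_atTop⟩

private lemma extract : ∀ (m : ℕ) (u : ℕ → ℕ → ℝ), ∃ φ : ℕ → ℕ, StrictMono φ ∧
    ∀ i < m, (∃ C : ℝ, ∀ k, u i (φ k) ≤ C) ∨ Tendsto (fun k => u i (φ k)) atTop atTop := by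
  intro m
  induction m with
  | zero => exact fun u => ⟨id, strictMono_id, by omega⟩
  | succ m ih =>
    intro u
    obtain ⟨φ, hφ, hprop⟩ := ih u
    by_cases h : ∃ C : ℝ, ∀ k, u m (φ k) ≤ C
    · refine ⟨φ, hφ, fun i hi => ?_⟩
      rcases Nat.lt_or_ge i m with him | him
      · exact hprop i him
      · have : i = m := by omega
        subst this
        exact Or.inl h
    · obtain ⟨ψ, hψ, hT⟩ := sub_of_unbdd _ h
      refine ⟨φ ∘ ψ, hφ.comp hψ, fun i hi => ?_⟩
      rcases Nat.lt_or_ge i m with him | him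
      · rcases hprop i him with ⟨C, hC⟩ | hTi
        · exact Or.inl ⟨C, fun k => hC (ψ k)⟩
        · exact Or.inr (hTi.comp hψ.tendsto_atTop)
      · have : i = m := by omega
        subst this
        exact Or.inr hT

/-- Combinatorial selection lemma: given `2N+1` ordered sequences in the extended real
line (the interior ones being real) whose first and last gaps tend to `+∞`, after
passing to a subsequence one can find indices `1 ≤ i₀ ≤ j₀ ≤ N` such that
`x_{2j₀−1} − x_{2i₀−1}` stays bounded while the gaps `x_{2i₀−1} − x_{2i₀−2}` and
`x_{2j₀} − x_{2j₀−1}` tend to `+∞`. -/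
theorem stmt_5 (N : ℕ) (hN : 1 ≤ N) (x : ℕ → ℕ → EReal)
    (hmono : ∀ k : ℕ, ∀ j < 2 * N, x k j < x k (j + 1))
    (hreal : ∀ k : ℕ, ∀ j : ℕ, 1 ≤ j → j ≤ 2 * N - 1 → ∃ r : ℝ, x k j = (r : EReal))
    (hfirst : Tendsto (fun k => x k 1 - x k 0) atTop (nhds ⊤))
    (hlast : Tendsto (fun k => x k (2 * N) - x k (2 * N - 1)) atTop (nhds ⊤)) :
    ∃ i₀ j₀ : ℕ, 1 ≤ i₀ ∧ i₀ ≤ j₀ ∧ j₀ ≤ N ∧ ∃ φ : ℕ → ℕ, StrictMono φ ∧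
      -- (a) the sequence `x_{2j₀−1} − x_{2i₀−1}` is bounded
      (∃ C : ℝ, ∀ k : ℕ,
        x (φ k) (2 * j₀ - 1) - x (φ k) (2 * i₀ - 1) ≤ (C : EReal)) ∧
      -- (b) `x_{2i₀−1} − x_{2i₀−2} → +∞`
      Tendsto (fun k => x (φ k) (2 * i₀ - 1) - x (φ k) (2 * i₀ - 2)) atTop (nhds ⊤) ∧
      -- (c) `x_{2j₀} − x_{2j₀−1} → +∞`
      Tendsto (fun k => x (φ k) (2 * j₀) - x (φ k) (2 * j₀ - 1)) atTop (nhds ⊤) := by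
  classical
  set y : ℕ → ℕ → ℝ := fun k j => (x k j).toReal with hy_def
  have hy : ∀ k j, 1 ≤ j → j ≤ 2 * N - 1 → ((y k j : ℝ) : EReal) = x k j := by
    intro k j h1 h2
    obtain ⟨r, hr⟩ := hreal k j h1 h2
    simp [hy_def, hr]
  obtain ⟨φ, hφ, hu⟩ := extract (2 * N - 2) (fun t k => y k (t + 2) - y k (t + 1))
  have hTT1 : Tendsto (fun k => x (φ k) 1 - x (φ k) 0) atTop (nhds ⊤) :=
    hfirst.comp hφ.tendsto_atTop
  have hTT2N : Tendsto (fun k => x (φ k) (2 * N) - x (φ k) (2 * N - 1)) atTop (nhds ⊤) :=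
    hlast.comp hφ.tendsto_atTop
  have hdich : ∀ m, 2 ≤ m → m ≤ 2 * N - 1 →
      (∃ C : ℝ, ∀ k, x (φ k) m - x (φ k) (m - 1) ≤ (C : EReal)) ∨
      Tendsto (fun k => x (φ k) m - x (φ k) (m - 1)) atTop (nhds ⊤) := by
    intro m h2 h2n
    have hx : ∀ k, x (φ k) m - x (φ k) (m - 1) =
        ((y (φ k) m - y (φ k) (m - 1) : ℝ) : EReal) := by
      intro k
      rw [EReal.coe_sub, hy _ _ (by omega) h2n, hy _ _ (by omega) (by omega)]
    have hi1 : m - 2 + 2 = m := by omega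
    have hi2 : m - 2 + 1 = m - 1 := by omega
    have := hu (m - 2) (by omega)
    simp only [hi1, hi2] at this
    rcases this with ⟨C, hC⟩ | hT
    · exact Or.inl ⟨C, fun k => by rw [hx]; exact_mod_cast hC k⟩
    · right
      rw [EReal.tendsto_nhds_top_iff_real]
      intro r
      filter_upwards [hT.eventually_gt_atTop r] with k hk
      rw [hx]
      exact_mod_cast hk
  set P : ℕ → Prop := fun m => Odd m ∧
    Tendsto (fun k => x (φ k) m - x (φ k) (m - 1)) atTop (nhds ⊤) with hP_def
  have hP1 : P 1 := ⟨odd_one, hTT1⟩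
  set m₀ : ℕ := Nat.findGreatest P (2 * N) with hm₀_def
  have hm₀P : P m₀ := Nat.findGreatest_spec (by omega : 1 ≤ 2 * N) hP1
  have hm₀1 : 1 ≤ m₀ := Nat.le_findGreatest (by omega) hP1
  have hm₀le : m₀ ≤ 2 * N := Nat.findGreatest_le _
  obtain ⟨a, ha⟩ := hm₀P.1
  have hm₀lt : m₀ < 2 * N := by omega
  set Q : ℕ → Prop := fun m => Even m ∧ m₀ < m ∧
    Tendsto (fun k => x (φ k) m - x (φ k) (m - 1)) atTop (nhds ⊤) with hQ_def
  have hQex : ∃ m, Q m := ⟨2 * N, ⟨N, by omega⟩, hm₀lt, hTT2N⟩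
  set m₁ : ℕ := Nat.find hQex with hm₁_def
  obtain ⟨hm₁even, hm₁gt, hm₁T⟩ : Q m₁ := Nat.find_spec hQex
  have hm₁le : m₁ ≤ 2 * N := Nat.find_min' hQex ⟨⟨N, by omega⟩, hm₀lt, hTT2N⟩
  obtain ⟨b, hb⟩ := hm₁even
  have hB : ∀ t, m₀ < t → t < m₁ →
      ∃ C : ℝ, ∀ k, x (φ k) t - x (φ k) (t - 1) ≤ (C : EReal) := by
    intro t h1 h2
    rcases hdich t (by omega) (by omega) with hb' | hT
    · exact hb'
    · exfalso
      rcases Nat.even_or_odd t with he | ho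
      · exact Nat.find_min hQex h2 ⟨he, h1, hT⟩
      · exact Nat.findGreatest_is_greatest h1 (by omega) ⟨ho, hT⟩
  have hBr : ∀ t, m₀ < t → t < m₁ → ∃ C : ℝ, ∀ k, y (φ k) t - y (φ k) (t - 1) ≤ C := by
    intro t h1 h2
    obtain ⟨C, hC⟩ := hB t h1 h2
    refine ⟨C, fun k => ?_⟩
    have := hC k
    rw [← hy _ t (by omega) (by omega), ← hy _ (t - 1) (by omega) (by omega),
      ← EReal.coe_sub] at this
    exact_mod_cast this
  have hbound : ∀ t, m₀ ≤ t → t ≤ m₁ - 1 → ∃ C : ℝ, ∀ k, y (φ k) t - y (φ k) m₀ ≤ C := by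
    intro t
    induction t with
    | zero => intro h _; exact absurd h (by omega)
    | succ t ih =>
      intro h1 h2
      rcases Nat.eq_or_lt_of_le h1 with heq | hlt
      · exact ⟨0, fun k => by rw [← heq]; simp⟩
      · obtain ⟨C1, hC1⟩ := ih (by omega) (by omega)
        obtain ⟨C2, hC2⟩ := hBr (t + 1) (by omega) (by omega)
        refine ⟨C2 + C1, fun k => ?_⟩
        have h2' := hC2 k
        simp only [Nat.add_sub_cancel] at h2'
        have h1' := hC1 k
        linarith
  refine ⟨a + 1, b, by omega, by omega, by omega, φ, hφ, ?_, ?_, ?_⟩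
  · obtain ⟨C, hC⟩ := hbound (m₁ - 1) (by omega) le_rfl
    refine ⟨C, fun k => ?_⟩
    have e1 : 2 * b - 1 = m₁ - 1 := by omega
    have e2 : 2 * (a + 1) - 1 = m₀ := by omega
    rw [e1, e2, ← hy _ (m₁ - 1) (by omega) (by omega), ← hy _ m₀ (by omega) (by omega),
      ← EReal.coe_sub]
    exact_mod_cast hC k
  · have e2 : 2 * (a + 1) - 1 = m₀ := by omega
    have e3 : 2 * (a + 1) - 2 = m₀ - 1 := by omega
    simpa only [e2, e3] using hm₀P.2
  · have e4 : 2 * b = m₁ := by omega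
    have e5 : 2 * b - 1 = m₁ - 1 := by omega
    simpa only [e4, e5] using hm₁T
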